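/- For every two-counter machine M = (Q,q_s,q_f,Delta) there exist a finite set Locks with exactly 8 elements, a 2-PDS CP=(P_1,P_2) communicating via reentrant Locks in which both P_1 and P_2 have empty stack alphabet (hence both threads trivially follow contextual reentrant locking and never use their stacks), and control states q_f' of P_1 and q_* of P_2, such that M halts if and only if Reach(CP, q_f', q_*) holds. -/

import Mathlib

/-- Transition labels of a pushdown system using locks. -/
inductive Label (L : Type) : Type where
  | state : Label L
  | push : Label L
  | pop : Label L
  | acq : L → Label L
  | rel : L → Label L

/-- A pushdown system (PDS) using the set of reentrant locks `L`, with control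
states `Q` and stack alphabet `Γ`. -/
structure PDS (Q Γ L : Type) where
  start : Q
  stateTr : Set (Q × Q)
  pushTr : Set (Q × (Q × Γ))
  popTr : Set ((Q × Γ) × Q)
  acqTr : Set (Q × (Q × L))
  relTr : Set ((Q × L) × Q)

/-- A local configuration of one thread using reentrant locks: control state, stack,
and a function counting how many times each lock is held. -/
abbrev RConf (Q Γ L : Type) : Type := Q × List Γ × (L → ℕ)

/-- One labelled step of a single thread using reentrant locks, in an environment
where the locks in `free` are free (held by no thread): an acquisition of `l`
requires `l` to be free or already held by the thread and increments the count;
a release requires a positive count and decrements it. -/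
def PDS.RStep {Q Γ L : Type} [DecidableEq L] (P : PDS Q Γ L) (free : Set L)
    (c : RConf Q Γ L) : Label L → RConf Q Γ L → Prop
  | .state, c' => (c.1, c'.1) ∈ P.stateTr ∧ c'.2.1 = c.2.1 ∧ c'.2.2 = c.2.2
  | .push, c' => ∃ a, (c.1, (c'.1, a)) ∈ P.pushTr ∧ c'.2.1 = c.2.1 ++ [a] ∧ c'.2.2 = c.2.2
  | .pop, c' => ∃ a, ((c.1, a), c'.1) ∈ P.popTr ∧ c.2.1 = c'.2.1 ++ [a] ∧ c'.2.2 = c.2.2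
  | .acq l, c' => (c.1, (c'.1, l)) ∈ P.acqTr ∧ (l ∈ free ∨ 0 < c.2.2 l) ∧
      c'.2.1 = c.2.1 ∧ c'.2.2 = Function.update c.2.2 l (c.2.2 l + 1)
  | .rel l, c' => ((c.1, l), c'.1) ∈ P.relTr ∧ 0 < c.2.2 l ∧
      c'.2.1 = c.2.1 ∧ c'.2.2 = Function.update c.2.2 l (c.2.2 l - 1)

/-- A 2-PDS communicating via reentrant locks `L`. -/
structure TwoPDS (Q₀ Γ₀ Q₁ Γ₁ L : Type) where
  P0 : PDS Q₀ Γ₀ L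
  P1 : PDS Q₁ Γ₁ L

namespace TwoPDS

variable {Q₀ Γ₀ Q₁ Γ₁ L : Type} [DecidableEq L]

/-- A configuration of a 2-PDS communicating via reentrant locks. -/
abbrev RConf2 (Q₀ Γ₀ Q₁ Γ₁ L : Type) : Type := RConf Q₀ Γ₀ L × RConf Q₁ Γ₁ L

/-- The locks that are free, i.e. held zero times by both threads. -/
def rfreeLocks (s : RConf2 Q₀ Γ₀ Q₁ Γ₁ L) : Set L :=
  {l | s.1.2.2 l = 0 ∧ s.2.2.2 l = 0}

/-- The labelled transition relation of a 2-PDS communicating via reentrant locks. -/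
def RStep (CP : TwoPDS Q₀ Γ₀ Q₁ Γ₁ L) (s : RConf2 Q₀ Γ₀ Q₁ Γ₁ L)
    (lab : Label L × Fin 2) (t : RConf2 Q₀ Γ₀ Q₁ Γ₁ L) : Prop :=
  (lab.2 = 0 ∧ CP.P0.RStep (rfreeLocks s) s.1 lab.1 t.1 ∧ t.2 = s.2) ∨
  (lab.2 = 1 ∧ CP.P1.RStep (rfreeLocks s) s.2 lab.1 t.2 ∧ t.1 = s.1)

/-- The initial configuration: both threads have empty stacks and hold no locks. -/
def rinitConf (CP : TwoPDS Q₀ Γ₀ Q₁ Γ₁ L) : RConf2 Q₀ Γ₀ Q₁ Γ₁ L :=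
  ((CP.P0.start, [], fun _ => 0), (CP.P1.start, [], fun _ => 0))

/-- A (finite) computation of a 2-PDS communicating via reentrant locks. -/
structure RComp (CP : TwoPDS Q₀ Γ₀ Q₁ Γ₁ L) where
  len : ℕ
  s : ℕ → RConf2 Q₀ Γ₀ Q₁ Γ₁ L
  lab : ℕ → Label L × Fin 2
  init : s 0 = CP.rinitConf
  step : ∀ k < len, CP.RStep (s k) (lab k) (s (k + 1))

variable {CP : TwoPDS Q₀ Γ₀ Q₁ Γ₁ L}

/-- Height of the stack of thread `i` in the `k`-th configuration. -/
def RComp.height (c : RComp CP) (i : Fin 2) (k : ℕ) : ℕ :=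
  if i = 0 then (c.s k).1.2.1.length else (c.s k).2.2.1.length

/-- The lock-count function of thread `i` in the `k`-th configuration. -/
def RComp.held (c : RComp CP) (i : Fin 2) (k : ℕ) : L → ℕ :=
  if i = 0 then (c.s k).1.2.2 else (c.s k).2.2.2

/-- The procedure return of thread `i` at position `j` matches the procedure call of
thread `i` at position `l`. -/
def RComp.Matching (c : RComp CP) (i : Fin 2) (l j : ℕ) : Prop :=
  l < j ∧ j < c.len ∧ c.lab l = (Label.push, i) ∧ c.lab j = (Label.pop, i) ∧
    c.height i l = c.height i (j + 1) ∧
    ∀ p, l + 1 ≤ p → p ≤ j → c.height i (l + 1) ≤ c.height i p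

/-- Thread `i` of the 2-PDS follows contextual (reentrant) locking. -/
def RContextual (CP : TwoPDS Q₀ Γ₀ Q₁ Γ₁ L) (i : Fin 2) : Prop :=
  ∀ c : RComp CP, ∀ l j, c.Matching i l j →
    c.held i l = c.held i (j + 1) ∧
    ∀ l' r, l ≤ r → r ≤ j → c.held i l l' ≤ c.held i r l'

/-- `RReach CP p q`: some computation of `CP` ends in a configuration whose control
states are `p` and `q`. -/
def RReach (CP : TwoPDS Q₀ Γ₀ Q₁ Γ₁ L) (p : Q₀) (q : Q₁) : Prop :=
  ∃ c : RComp CP, (c.s c.len).1.1 = p ∧ (c.s c.len).2.1 = q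

end TwoPDS

/-- A two-counter machine `M = (Q, q_s, q_f, Δ)` with state transitions, increment,
decrement, and zero-test transitions for each of the two counters. -/
structure TCM (Q : Type) where
  start : Q
  final : Q
  stateTr : Set (Q × Q)
  incTr1 : Set (Q × Q)
  incTr2 : Set (Q × Q)
  decTr1 : Set (Q × Q)
  decTr2 : Set (Q × Q)
  zTr1 : Set (Q × Q)
  zTr2 : Set (Q × Q)

/-- One step of a two-counter machine on configurations `(q, c₁, c₂)`. -/
def TCM.Step {Q : Type} (M : TCM Q) (x y : Q × ℕ × ℕ) : Prop :=
  ((x.1, y.1) ∈ M.stateTr ∧ y.2.1 = x.2.1 ∧ y.2.2 = x.2.2) ∨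
  ((x.1, y.1) ∈ M.incTr1 ∧ y.2.1 = x.2.1 + 1 ∧ y.2.2 = x.2.2) ∨
  ((x.1, y.1) ∈ M.incTr2 ∧ y.2.1 = x.2.1 ∧ y.2.2 = x.2.2 + 1) ∨
  ((x.1, y.1) ∈ M.decTr1 ∧ x.2.1 = y.2.1 + 1 ∧ y.2.2 = x.2.2) ∨
  ((x.1, y.1) ∈ M.decTr2 ∧ y.2.1 = x.2.1 ∧ x.2.2 = y.2.2 + 1) ∨
  ((x.1, y.1) ∈ M.zTr1 ∧ x.2.1 = 0 ∧ y.2.1 = 0 ∧ y.2.2 = x.2.2) ∨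
  ((x.1, y.1) ∈ M.zTr2 ∧ x.2.2 = 0 ∧ y.2.1 = x.2.1 ∧ y.2.2 = 0)

/-- A two-counter machine halts if from `(q_s, 0, 0)` it can reach a configuration
whose state is `q_f`. -/
def TCM.Halts {Q : Type} (M : TCM Q) : Prop :=
  ∃ x : Q × ℕ × ℕ, Relation.ReflTransGen M.Step (M.start, 0, 0) x ∧ x.1 = M.final

section Construction

variable {Q : Type} (M : TCM Q)

/-- Control states of thread 0. -/
abbrev QA (Q : Type) : Type := Fin 3 ⊕ (Q ⊕ Bool × Fin 3 × Q × Q)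
/-- Control states of thread 1. -/
abbrev QB : Type := Fin 5 ⊕ (Bool × Fin 5)

abbrev st (i : Fin 3) : QA Q := Sum.inl i
abbrev sim (q : Q) : QA Q := Sum.inr (Sum.inl q)
abbrev tst (b : Bool) (j : Fin 3) (q q' : Q) : QA Q := Sum.inr (Sum.inr (b, j, q, q'))
abbrev ti (i : Fin 5) : QB := Sum.inl i
abbrev uu (b : Bool) (k : Fin 5) : QB := Sum.inr (b, k)

abbrev cL (b : Bool) : Fin 8 := if b then 0 else 1
abbrev rL (b : Bool) : Fin 8 := if b then 2 else 3
abbrev aL (b : Bool) : Fin 8 := if b then 4 else 5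
abbrev gL : Fin 8 := 6

def incT (b : Bool) : Set (Q × Q) := if b then M.incTr1 else M.incTr2
def decT (b : Bool) : Set (Q × Q) := if b then M.decTr1 else M.decTr2
def zT (b : Bool) : Set (Q × Q) := if b then M.zTr1 else M.zTr2

def pdsA : PDS (QA Q) Empty (Fin 8) where
  start := st 0
  stateTr := {x | ∃ q q', (q, q') ∈ M.stateTr ∧ x = (sim q, sim q')}
  pushTr := ∅
  popTr := ∅
  acqTr := {x | x = (st 0, (st 1, gL)) ∨ x = (st 1, (st 2, rL true)) ∨
    x = (st 2, (sim M.start, rL false)) ∨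
    (∃ b q q', (q, q') ∈ incT M b ∧ x = (sim q, (sim q', cL b))) ∨
    (∃ b q q', x = (tst b 0 q q', (tst b 1 q q', aL b))) ∨
    (∃ b q q', x = (tst b 2 q q', (sim q', rL b)))}
  relTr := {x | (∃ b q q', (q, q') ∈ decT M b ∧ x = ((sim q, cL b), sim q')) ∨
    (∃ b q q', (q, q') ∈ zT M b ∧ x = ((sim q, rL b), tst b 0 q q')) ∨
    (∃ b q q', x = ((tst b 1 q q', aL b), tst b 2 q q'))}

def pdsB : PDS QB Empty (Fin 8) where
  start := ti 0
  stateTr := ∅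
  pushTr := ∅
  popTr := ∅
  acqTr := {x | x = (ti 0, (ti 1, aL true)) ∨ x = (ti 1, (ti 2, aL false)) ∨
    x = (ti 2, (ti 3, gL)) ∨
    (∃ b, x = (ti 4, (uu b 0, rL b))) ∨ (∃ b, x = (uu b 0, (uu b 1, cL b))) ∨
    (∃ b, x = (uu b 3, (uu b 4, aL b)))}
  relTr := {x | x = ((ti 3, gL), ti 4) ∨ (∃ b, x = ((uu b 1, cL b), uu b 2)) ∨
    (∃ b, x = ((uu b 2, aL b), uu b 3)) ∨ (∃ b, x = ((uu b 4, rL b), ti 4))}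

def CPM : TwoPDS (QA Q) Empty QB Empty (Fin 8) := ⟨pdsA M, pdsB⟩

/-- Explicit vectors over `Fin 8`. -/
def vec8 (a0 a1 a2 a3 a4 a5 a6 a7 : ℕ) : Fin 8 → ℕ := fun l =>
  if l = 0 then a0 else if l = 1 then a1 else if l = 2 then a2 else if l = 3 then a3
  else if l = 4 then a4 else if l = 5 then a5 else if l = 6 then a6 else a7

/-- Lock counts of thread 0 at phase `p` with counter values `v₁ v₂`. -/
def H0 (p : QA Q) (v₁ v₂ : ℕ) : Fin 8 → ℕ :=
  match p with
  | .inl i => if i = 0 then vec8 v₁ v₂ 0 0 0 0 0 0 else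
      if i = 1 then vec8 v₁ v₂ 0 0 0 0 1 0 else vec8 v₁ v₂ 1 0 0 0 1 0
  | .inr (.inl _) => vec8 v₁ v₂ 1 1 0 0 1 0
  | .inr (.inr (b, j, _, _)) =>
      if b then vec8 v₁ v₂ 0 1 ((if j = 1 then 1 else 0)) 0 1 0
      else vec8 v₁ v₂ 1 0 0 ((if j = 1 then 1 else 0)) 1 0

/-- Lock counts of thread 1 at phase `r`. -/
def H1 (r : QB) : Fin 8 → ℕ :=
  match r with
  | .inl i => if i = 0 then vec8 0 0 0 0 0 0 0 0 else if i = 1 then vec8 0 0 0 0 1 0 0 0 else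
      if i = 2 then vec8 0 0 0 0 1 1 0 0 else if i = 3 then vec8 0 0 0 0 1 1 1 0 else
      vec8 0 0 0 0 1 1 0 0
  | .inr (b, k) =>
      if b then vec8 ((if k = 1 then 1 else 0)) 0 1 0 ((if k = 3 then 0 else 1)) 1 0 0
      else vec8 0 ((if k = 1 then 1 else 0)) 0 1 1 ((if k = 3 then 0 else 1)) 0 0

def RM (q : Q) (v₁ v₂ : ℕ) : Prop :=
  Relation.ReflTransGen M.Step (M.start, 0, 0) (q, v₁, v₂)

abbrev vb (b : Bool) (v₁ v₂ : ℕ) : ℕ := if b then v₁ else v₂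

lemma RM.stp {q q' v₁ v₂} (h : RM M q v₁ v₂) (hb : (q, q') ∈ M.stateTr) : RM M q' v₁ v₂ :=
  h.tail (Or.inl ⟨hb, rfl, rfl⟩)

lemma RM.inc {q q' v₁ v₂} {b} (h : RM M q v₁ v₂) (hb : (q, q') ∈ incT M b) :
    RM M q' (if b then v₁ + 1 else v₁) (if b then v₂ else v₂ + 1) := by
  cases b <;> simp only [incT, if_true, if_false, Bool.false_eq_true] at hb ⊢ <;>
    exact h.tail (by simp only [TCM.Step]; tauto)

lemma RM.dec {q q' v₁ v₂} {b} (h : RM M q v₁ v₂) (hb : (q, q') ∈ decT M b)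
    (hv : 0 < vb b v₁ v₂) :
    RM M q' (if b then v₁ - 1 else v₁) (if b then v₂ else v₂ - 1) := by
  cases b <;> simp only [decT, vb, if_true, if_false, Bool.false_eq_true] at hb hv ⊢
  · refine h.tail (Or.inr (Or.inr (Or.inr (Or.inr (Or.inl ⟨hb, rfl, by dsimp only; omega⟩)))))
  · refine h.tail (Or.inr (Or.inr (Or.inr (Or.inl ⟨hb, by dsimp only; omega, rfl⟩))))

lemma RM.zt {q q' v₁ v₂} {b} (h : RM M q v₁ v₂) (hb : (q, q') ∈ zT M b)
    (hv : vb b v₁ v₂ = 0) : RM M q' v₁ v₂ := by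
  cases b <;> simp only [zT, vb, if_true, if_false, Bool.false_eq_true] at hb hv <;>
    exact h.tail (by simp only [TCM.Step]; tauto)

def zOK (b : Bool) (q q' : Q) (v₁ v₂ : ℕ) : Prop := (q, q') ∈ zT M b ∧ RM M q v₁ v₂

def LiveIdle (p : QA Q) (v₁ v₂ : ℕ) : Prop :=
  ((p = st 0 ∨ p = st 1 ∨ p = st 2) ∧ v₁ = 0 ∧ v₂ = 0) ∨
  (∃ q, p = sim q ∧ RM M q v₁ v₂) ∨
  (∃ b q q', p = tst b 0 q q' ∧ zOK M b q q' v₁ v₂) ∨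
  (∃ b q q', p = tst b 2 q q' ∧ zOK M b q q' v₁ v₂ ∧ vb b v₁ v₂ = 0)

def LiveServe (b : Bool) (k : Fin 5) (p : QA Q) (v₁ v₂ : ℕ) : Prop :=
  (k ≠ 0 → vb b v₁ v₂ = 0) ∧
  (((p = st 0 ∨ p = st 1 ∨ (b = false ∧ p = st 2)) ∧ v₁ = 0 ∧ v₂ = 0) ∨
   (∃ q q', p = tst b 0 q q' ∧ zOK M b q q' v₁ v₂) ∨
   (∃ q q', p = tst b 1 q q' ∧ zOK M b q q' v₁ v₂ ∧ k = 3) ∨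
   (∃ q q', p = tst b 2 q q' ∧ zOK M b q q' v₁ v₂ ∧ vb b v₁ v₂ = 0))

def Joint (p : QA Q) (r : QB) (v₁ v₂ : ℕ) : Prop :=
  match r with
  | .inl i => if i = 3 then (p = st 0 ∧ v₁ = 0 ∧ v₂ = 0)
      else if i = 4 then LiveIdle M p v₁ v₂
      else (p = st 0 → v₁ = 0 ∧ v₂ = 0)
  | .inr (b, k) => LiveServe M b k p v₁ v₂

def GInv (s : TwoPDS.RConf2 (QA Q) Empty QB Empty (Fin 8)) : Prop :=
  ∃ v₁ v₂, s.1.2.2 = H0 s.1.1 v₁ v₂ ∧ s.2.2.2 = H1 s.2.1 ∧ Joint M s.1.1 s.2.1 v₁ v₂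

end Construction

section Sound

variable {Q : Type} (M : TCM Q)

lemma freeY {x y : ℕ} (hen : (x = 0 ∧ y = 0) ∨ 0 < x) (hx : x = 0) : y = 0 := by
  rcases hen with ⟨-, h⟩ | h <;> omega

lemma H0_at_c (p : QA Q) (v₁ v₂ b) : H0 p v₁ v₂ (cL b) = vb b v₁ v₂ := by
  rcases p with i | q | ⟨b', j, q, q'⟩ <;> cases b <;>
    simp only [H0, vb, cL, if_true, if_false, Bool.false_eq_true] <;>
    first
      | rfl
      | (split_ifs <;> rfl)

lemma H0_g_zero (p : QA Q) (v₁ v₂) (h : H0 p v₁ v₂ gL = 0) : p = st 0 := by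
  rcases p with i | q | ⟨b', j, q, q'⟩
  · fin_cases i
    · rfl
    · exact absurd h one_ne_zero
    · exact absurd h one_ne_zero
  · exact absurd h one_ne_zero
  · cases b' <;> exact absurd h one_ne_zero

lemma H0_r_zero (p : QA Q) (v₁ v₂ b) (h : H0 p v₁ v₂ (rL b) = 0) :
    p = st 0 ∨ p = st 1 ∨ (b = false ∧ p = st 2) ∨ ∃ j q q', p = tst b j q q' := by
  rcases p with i | q | ⟨b', j, q, q'⟩
  · fin_cases i
    · exact Or.inl rfl
    · exact Or.inr (Or.inl rfl)
    · cases b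
      · exact Or.inr (Or.inr (Or.inl ⟨rfl, rfl⟩))
      · exact absurd h one_ne_zero
  · cases b <;> exact absurd h one_ne_zero
  · cases b <;> cases b'
    · exact Or.inr (Or.inr (Or.inr ⟨j, q, q', rfl⟩))
    · exact absurd h one_ne_zero
    · exact absurd h one_ne_zero
    · exact Or.inr (Or.inr (Or.inr ⟨j, q, q', rfl⟩))

lemma H0_a_zero (p : QA Q) (v₁ v₂ b) (h : H0 p v₁ v₂ (aL b) = 0) :
    ∀ q q', p ≠ tst b 1 q q' := by
  rintro q q' rfl
  cases b <;> exact absurd h one_ne_zero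

lemma H1_g_zero (r : QB) (h : H1 r gL = 0) : r ≠ ti 3 := by
  rintro rfl; exact absurd h one_ne_zero

lemma H1_a_zero (r : QB) (b) (h : H1 r (aL b) = 0) :
    r = ti 0 ∨ (b = false ∧ r = ti 1) ∨ r = uu b 3 := by
  rcases r with i | ⟨b', k⟩
  · fin_cases i
    · exact Or.inl rfl
    · cases b
      · exact Or.inr (Or.inl ⟨rfl, rfl⟩)
      · exact absurd h one_ne_zero
    · cases b <;> exact absurd h one_ne_zero
    · cases b <;> exact absurd h one_ne_zero
    · cases b <;> exact absurd h one_ne_zero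
  · cases b <;> cases b'
    · rcases eq_or_ne k 3 with rfl | hk
      · exact Or.inr (Or.inr rfl)
      · have h' : (if k = (3 : Fin 5) then (0:ℕ) else 1) = 0 := h
        rw [if_neg hk] at h'
        exact absurd h' one_ne_zero
    · exact absurd h one_ne_zero
    · exact absurd h one_ne_zero
    · rcases eq_or_ne k 3 with rfl | hk
      · exact Or.inr (Or.inr rfl)
      · have h' : (if k = (3 : Fin 5) then (0:ℕ) else 1) = 0 := h
        rw [if_neg hk] at h'
        exact absurd h' one_ne_zero

lemma H1_r_zero (r : QB) (b) (h : H1 r (rL b) = 0) : ∀ k, r ≠ uu b k := by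
  rintro k rfl
  cases b <;> exact absurd h one_ne_zero

end Sound

section Step

variable {Q : Type} (M : TCM Q)

theorem inv_step {s t : TwoPDS.RConf2 (QA Q) Empty QB Empty (Fin 8)} {lab}
    (h : (CPM M).RStep s lab t) (hs : GInv M s) : GInv M t := by
  obtain ⟨⟨p, ws, f⟩, r, wr, g⟩ := s
  obtain ⟨⟨p', ws', f'⟩, r', wr', g'⟩ := t
  obtain ⟨v₁, v₂, hf, hg, hj⟩ := hs
  dsimp only at hf hg hj
  subst hf; subst hg
  obtain ⟨l, i⟩ := lab
  rcases h with ⟨-, hst, ht⟩ | ⟨-, hst, ht⟩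
  · -- thread 0 moves
    simp only [Prod.mk.injEq] at ht
    obtain ⟨rfl, rfl, rfl⟩ := ht
    dsimp only [CPM] at hst
    cases l with
    | push => obtain ⟨a, -⟩ := hst; exact a.elim
    | pop => obtain ⟨a, -⟩ := hst; exact a.elim
    | state =>
      simp only [PDS.RStep] at hst
      obtain ⟨hmem, -, hf'⟩ := hst
      simp only [pdsA, Set.mem_setOf_eq, Prod.mk.injEq] at hmem
      try dsimp only at hmem hf'
      obtain ⟨q, q', hq, rfl, rfl⟩ := hmem
      refine ⟨v₁, v₂, hf', rfl, ?_⟩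
      rcases r' with i | ⟨b, k⟩
      · fin_cases i
      -- dead states
        · exact (fun hx => absurd hx (by simp) : Joint M (sim q') (ti 0) v₁ v₂)
        · exact (fun hx => absurd hx (by simp) : Joint M (sim q') (ti 1) v₁ v₂)
        · exact (fun hx => absurd hx (by simp) : Joint M (sim q') (ti 2) v₁ v₂)
        · obtain ⟨hx, -⟩ : sim q = st 0 ∧ v₁ = 0 ∧ v₂ = 0 := hj
          exact absurd hx (by simp)
        · have hj' : LiveIdle M (sim q) v₁ v₂ := hj
          refine (?_ : LiveIdle M (sim q') v₁ v₂)
          rcases hj' with ⟨hx, -⟩ | ⟨q0, hx, hR⟩ | ⟨b, qa, qb, hx, -⟩ | ⟨b, qa, qb, hx, -⟩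
          · rcases hx with hx | hx | hx <;> exact absurd hx (by simp)
          · obtain rfl : q0 = q := by simpa using hx.symm
            exact Or.inr (Or.inl ⟨q', rfl, hR.stp M hq⟩)
          · exact absurd hx (by simp)
          · exact absurd hx (by simp)
      · exfalso
        have hj' : LiveServe M b k (sim q) v₁ v₂ := hj
        rcases hj'.2 with ⟨hx, -⟩ | ⟨qa, qb, hx, -⟩ | ⟨qa, qb, hx, -⟩ | ⟨qa, qb, hx, -⟩
        · rcases hx with hx | hx | ⟨-, hx⟩ <;> exact absurd hx (by simp)
        · exact absurd hx (by simp)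
        · exact absurd hx (by simp)
        · exact absurd hx (by simp)
    | acq lk =>
      simp only [PDS.RStep] at hst
      obtain ⟨hmem, hen, -, hf'⟩ := hst
      simp only [pdsA, Set.mem_setOf_eq, Prod.mk.injEq] at hmem
      simp only [TwoPDS.rfreeLocks, Set.mem_setOf_eq] at hen
      try dsimp only at hen hf' hmem
      rcases hmem with ⟨rfl, rfl, rfl⟩ | ⟨rfl, rfl, rfl⟩ | ⟨rfl, rfl, rfl⟩ |
        ⟨b, q, q', hb, rfl, rfl, rfl⟩ | ⟨b, q, q', rfl, rfl, rfl⟩ | ⟨b, q, q', rfl, rfl, rfl⟩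
      · -- st 0 → st 1, acq g
        have hfree : H1 r' gL = 0 := freeY hen rfl
        refine ⟨v₁, v₂, by rw [hf']; funext l; fin_cases l <;> rfl, rfl, ?_⟩
        rcases r' with i | ⟨b, k⟩
        · fin_cases i
          · exact (fun hx => absurd hx (by simp) : Joint M (st 1) (ti 0) v₁ v₂)
          · exact (fun hx => absurd hx (by simp) : Joint M (st 1) (ti 1) v₁ v₂)
          · exact (fun hx => absurd hx (by simp) : Joint M (st 1) (ti 2) v₁ v₂)
          · exact absurd hfree (by decide)
          · have hj' : LiveIdle M (st 0) v₁ v₂ := hj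
            refine (?_ : LiveIdle M (st 1) v₁ v₂)
            rcases hj' with ⟨-, hv⟩ | ⟨q0, hx, -⟩ | ⟨b, qa, qb, hx, -⟩ | ⟨b, qa, qb, hx, -⟩
            · exact Or.inl ⟨Or.inr (Or.inl rfl), hv⟩
            · exact absurd hx (by simp)
            · exact absurd hx (by simp)
            · exact absurd hx (by simp)
        · have hj' : LiveServe M b k (st 0) v₁ v₂ := hj
          refine (?_ : LiveServe M b k (st 1) v₁ v₂)
          refine ⟨hj'.1, ?_⟩
          rcases hj'.2 with ⟨-, hv⟩ | ⟨qa, qb, hx, -⟩ | ⟨qa, qb, hx, -⟩ | ⟨qa, qb, hx, -⟩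
          · exact Or.inl ⟨Or.inr (Or.inl rfl), hv⟩
          · exact absurd hx (by simp)
          · exact absurd hx (by simp)
          · exact absurd hx (by simp)
      · -- st 1 → st 2, acq r1
        have hfree : H1 r' (rL true) = 0 := freeY hen rfl
        refine ⟨v₁, v₂, by rw [hf']; funext l; fin_cases l <;> rfl, rfl, ?_⟩
        rcases r' with i | ⟨b, k⟩
        · fin_cases i
          · exact (fun hx => absurd hx (by simp) : Joint M (st 2) (ti 0) v₁ v₂)
          · exact (fun hx => absurd hx (by simp) : Joint M (st 2) (ti 1) v₁ v₂)
          · exact (fun hx => absurd hx (by simp) : Joint M (st 2) (ti 2) v₁ v₂)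
          · obtain ⟨hx, -⟩ : st 1 = st 0 ∧ v₁ = 0 ∧ v₂ = 0 := hj
            exact absurd hx (by simp)
          · have hj' : LiveIdle M (st 1) v₁ v₂ := hj
            refine (?_ : LiveIdle M (st 2) v₁ v₂)
            rcases hj' with ⟨-, hv⟩ | ⟨q0, hx, -⟩ | ⟨b, qa, qb, hx, -⟩ | ⟨b, qa, qb, hx, -⟩
            · exact Or.inl ⟨Or.inr (Or.inr rfl), hv⟩
            · exact absurd hx (by simp)
            · exact absurd hx (by simp)
            · exact absurd hx (by simp)
        · obtain rfl : b = false := by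
            cases b
            · rfl
            · exact absurd hfree one_ne_zero
          have hj' : LiveServe M false k (st 1) v₁ v₂ := hj
          refine (?_ : LiveServe M false k (st 2) v₁ v₂)
          refine ⟨hj'.1, ?_⟩
          rcases hj'.2 with ⟨-, hv⟩ | ⟨qa, qb, hx, -⟩ | ⟨qa, qb, hx, -⟩ | ⟨qa, qb, hx, -⟩
          · exact Or.inl ⟨Or.inr (Or.inr ⟨rfl, rfl⟩), hv⟩
          · exact absurd hx (by simp)
          · exact absurd hx (by simp)
          · exact absurd hx (by simp)
      · -- st 2 → sim start, acq r2
        have hfree : H1 r' (rL false) = 0 := freeY hen rfl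
        refine ⟨v₁, v₂, by rw [hf']; funext l; fin_cases l <;> rfl, rfl, ?_⟩
        rcases r' with i | ⟨b, k⟩
        · fin_cases i
          · exact (fun hx => absurd hx (by simp) : Joint M (sim M.start) (ti 0) v₁ v₂)
          · exact (fun hx => absurd hx (by simp) : Joint M (sim M.start) (ti 1) v₁ v₂)
          · exact (fun hx => absurd hx (by simp) : Joint M (sim M.start) (ti 2) v₁ v₂)
          · obtain ⟨hx, -⟩ : st 2 = st 0 ∧ v₁ = 0 ∧ v₂ = 0 := hj
            exact absurd hx (by simp)
          · have hj' : LiveIdle M (st 2) v₁ v₂ := hj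
            refine (?_ : LiveIdle M (sim M.start) v₁ v₂)
            rcases hj' with ⟨-, hv1, hv2⟩ | ⟨q0, hx, -⟩ | ⟨b, qa, qb, hx, -⟩ | ⟨b, qa, qb, hx, -⟩
            · subst hv1; subst hv2
              exact Or.inr (Or.inl ⟨M.start, rfl, Relation.ReflTransGen.refl⟩)
            · exact absurd hx (by simp)
            · exact absurd hx (by simp)
            · exact absurd hx (by simp)
        · obtain rfl : b = true := by
            cases b
            · exact absurd hfree one_ne_zero
            · rfl
          exfalso
          have hj' : LiveServe M true k (st 2) v₁ v₂ := hj
          rcases hj'.2 with ⟨hx, -⟩ | ⟨qa, qb, hx, -⟩ | ⟨qa, qb, hx, -⟩ | ⟨qa, qb, hx, -⟩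
          · rcases hx with hx | hx | ⟨hx, -⟩ <;> simp at hx
          · exact absurd hx (by simp)
          · exact absurd hx (by simp)
          · exact absurd hx (by simp)
      · -- sim q → sim q', acq c (increment)
        refine ⟨if b then v₁ + 1 else v₁, if b then v₂ else v₂ + 1, ?_, rfl, ?_⟩
        · rw [hf']; cases b <;> (funext l; fin_cases l <;> rfl)
        · rcases r' with i | ⟨b', k⟩
          · fin_cases i
            · exact (fun hx => absurd hx (by simp) : (sim q' = st 0 → _))
            · exact (fun hx => absurd hx (by simp) : (sim q' = st 0 → _))
            · exact (fun hx => absurd hx (by simp) : (sim q' = st 0 → _))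
            · obtain ⟨hx, -⟩ : sim q = st 0 ∧ v₁ = 0 ∧ v₂ = 0 := hj
              exact absurd hx (by simp)
            · have hj' : LiveIdle M (sim q) v₁ v₂ := hj
              refine (?_ : LiveIdle M (sim q')
                (if b then v₁ + 1 else v₁) (if b then v₂ else v₂ + 1))
              rcases hj' with ⟨hx, -⟩ | ⟨q0, hx, hR⟩ | ⟨bb, qa, qb, hx, -⟩ | ⟨bb, qa, qb, hx, -⟩
              · rcases hx with hx | hx | hx <;> exact absurd hx (by simp)
              · obtain rfl : q0 = q := by simpa using hx.symm
                exact Or.inr (Or.inl ⟨q', rfl, hR.inc M hb⟩)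
              · exact absurd hx (by simp)
              · exact absurd hx (by simp)
          · exfalso
            have hj' : LiveServe M b' k (sim q) v₁ v₂ := hj
            rcases hj'.2 with ⟨hx, -⟩ | ⟨qa, qb, hx, -⟩ | ⟨qa, qb, hx, -⟩ | ⟨qa, qb, hx, -⟩
            · rcases hx with hx | hx | ⟨-, hx⟩ <;> exact absurd hx (by simp)
            · exact absurd hx (by simp)
            · exact absurd hx (by simp)
            · exact absurd hx (by simp)
      · -- tst b 0 → tst b 1, acq a (A → B)
        have hfree : H1 r' (aL b) = 0 := by
          refine freeY hen ?_
          cases b <;> rfl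
        refine ⟨v₁, v₂, by rw [hf']; cases b <;> (funext l; fin_cases l <;> rfl), rfl, ?_⟩
        rcases H1_a_zero r' b hfree with rfl | ⟨rfl, rfl⟩ | rfl
        · exact (fun hx => absurd hx (by simp) : Joint M (tst b 1 q q') (ti 0) v₁ v₂)
        · exact (fun hx => absurd hx (by simp) : Joint M (tst false 1 q q') (ti 1) v₁ v₂)
        · have hj' : LiveServe M b 3 (tst b 0 q q') v₁ v₂ := hj
          refine (?_ : LiveServe M b 3 (tst b 1 q q') v₁ v₂)
          refine ⟨hj'.1, ?_⟩
          rcases hj'.2 with ⟨hx, -⟩ | ⟨qa, qb, hx, hz⟩ | ⟨qa, qb, hx, -⟩ | ⟨qa, qb, hx, -⟩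
          · rcases hx with hx | hx | ⟨-, hx⟩ <;> exact absurd hx (by simp)
          · obtain ⟨rfl, rfl⟩ : q = qa ∧ q' = qb := by simpa using hx
            exact Or.inr (Or.inr (Or.inl ⟨_, _, rfl, hz, rfl⟩))
          · exact absurd hx (by simp)
          · exact absurd hx (by simp)
      · -- tst b 2 → sim q', acq r (C → S)
        have hfree : H1 r' (rL b) = 0 := by
          refine freeY hen ?_
          cases b <;> rfl
        refine ⟨v₁, v₂, by rw [hf']; cases b <;> (funext l; fin_cases l <;> rfl), rfl, ?_⟩
        rcases r' with i | ⟨b', k⟩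
        · fin_cases i
          · exact (fun hx => absurd hx (by simp) : (sim q' = st 0 → _))
          · exact (fun hx => absurd hx (by simp) : (sim q' = st 0 → _))
          · exact (fun hx => absurd hx (by simp) : (sim q' = st 0 → _))
          · obtain ⟨hx, -⟩ : tst b 2 q q' = st 0 ∧ v₁ = 0 ∧ v₂ = 0 := hj
            exact absurd hx (by simp)
          · have hj' : LiveIdle M (tst b 2 q q') v₁ v₂ := hj
            refine (?_ : LiveIdle M (sim q') v₁ v₂)
            rcases hj' with ⟨hx, -⟩ | ⟨q0, hx, -⟩ | ⟨bb, qa, qb, hx, -⟩ | ⟨bb, qa, qb, hx, hz, hv0⟩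
            · rcases hx with hx | hx | hx <;> exact absurd hx (by simp)
            · exact absurd hx (by simp)
            · exact absurd hx (by simp)
            · obtain ⟨rfl, rfl, rfl⟩ : b = bb ∧ q = qa ∧ q' = qb := by simpa using hx
              exact Or.inr (Or.inl ⟨q', rfl, hz.2.zt M hz.1 hv0⟩)
        · exfalso
          obtain rfl : b' = !b := by
            cases b <;> cases b' <;> first | rfl | exact absurd hfree one_ne_zero
          have hj' : LiveServe M (!b) k (tst b 2 q q') v₁ v₂ := hj
          rcases hj'.2 with ⟨hx, -⟩ | ⟨qa, qb, hx, -⟩ | ⟨qa, qb, hx, -⟩ | ⟨qa, qb, hx, -⟩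
          · rcases hx with hx | hx | ⟨-, hx⟩ <;> exact absurd hx (by simp)
          · refine absurd hx ?_
            cases b <;> simp
          · refine absurd hx ?_
            cases b <;> simp
          · refine absurd hx ?_
            cases b <;> simp
    | rel lk =>
      simp only [PDS.RStep] at hst
      obtain ⟨hmem, hpos, -, hf'⟩ := hst
      simp only [pdsA, Set.mem_setOf_eq, Prod.mk.injEq] at hmem
      try dsimp only at hpos hf' hmem
      rcases hmem with ⟨b, q, q', hb, ⟨rfl, rfl⟩, rfl⟩ | ⟨b, q, q', hb, ⟨rfl, rfl⟩, rfl⟩ |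
        ⟨b, q, q', ⟨rfl, rfl⟩, rfl⟩
      · -- sim q → sim q', rel c (decrement)
        have hv : 0 < vb b v₁ v₂ := by rw [← H0_at_c (sim q) v₁ v₂ b]; exact hpos
        refine ⟨if b then v₁ - 1 else v₁, if b then v₂ else v₂ - 1, ?_, rfl, ?_⟩
        · rw [hf']; cases b <;> (funext l; fin_cases l <;> rfl)
        · rcases r' with i | ⟨b', k⟩
          · fin_cases i
            · exact (fun hx => absurd hx (by simp) : (sim q' = st 0 → _))
            · exact (fun hx => absurd hx (by simp) : (sim q' = st 0 → _))
            · exact (fun hx => absurd hx (by simp) : (sim q' = st 0 → _))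
            · obtain ⟨hx, -⟩ : sim q = st 0 ∧ v₁ = 0 ∧ v₂ = 0 := hj
              exact absurd hx (by simp)
            · have hj' : LiveIdle M (sim q) v₁ v₂ := hj
              refine (?_ : LiveIdle M (sim q')
                (if b then v₁ - 1 else v₁) (if b then v₂ else v₂ - 1))
              rcases hj' with ⟨hx, -⟩ | ⟨q0, hx, hR⟩ | ⟨bb, qa, qb, hx, -⟩ | ⟨bb, qa, qb, hx, -⟩
              · rcases hx with hx | hx | hx <;> exact absurd hx (by simp)
              · obtain rfl : q0 = q := by simpa using hx.symm
                exact Or.inr (Or.inl ⟨q', rfl, hR.dec M hb hv⟩)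
              · exact absurd hx (by simp)
              · exact absurd hx (by simp)
          · exfalso
            have hj' : LiveServe M b' k (sim q) v₁ v₂ := hj
            rcases hj'.2 with ⟨hx, -⟩ | ⟨qa, qb, hx, -⟩ | ⟨qa, qb, hx, -⟩ | ⟨qa, qb, hx, -⟩
            · rcases hx with hx | hx | ⟨-, hx⟩ <;> exact absurd hx (by simp)
            · exact absurd hx (by simp)
            · exact absurd hx (by simp)
            · exact absurd hx (by simp)
      · -- sim q → tst b 0 q q', rel r (request)
        refine ⟨v₁, v₂, by rw [hf']; cases b <;> (funext l; fin_cases l <;> rfl), rfl, ?_⟩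
        rcases r' with i | ⟨b', k⟩
        · fin_cases i
          · exact (fun hx => absurd hx (by simp) : (tst b 0 q q' = st 0 → _))
          · exact (fun hx => absurd hx (by simp) : (tst b 0 q q' = st 0 → _))
          · exact (fun hx => absurd hx (by simp) : (tst b 0 q q' = st 0 → _))
          · obtain ⟨hx, -⟩ : sim q = st 0 ∧ v₁ = 0 ∧ v₂ = 0 := hj
            exact absurd hx (by simp)
          · have hj' : LiveIdle M (sim q) v₁ v₂ := hj
            refine (?_ : LiveIdle M (tst b 0 q q') v₁ v₂)
            rcases hj' with ⟨hx, -⟩ | ⟨q0, hx, hR⟩ | ⟨bb, qa, qb, hx, -⟩ | ⟨bb, qa, qb, hx, -⟩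
            · rcases hx with hx | hx | hx <;> exact absurd hx (by simp)
            · obtain rfl : q0 = q := by simpa using hx.symm
              exact Or.inr (Or.inr (Or.inl ⟨b, _, _, rfl, hb, hR⟩))
            · exact absurd hx (by simp)
            · exact absurd hx (by simp)
        · exfalso
          have hj' : LiveServe M b' k (sim q) v₁ v₂ := hj
          rcases hj'.2 with ⟨hx, -⟩ | ⟨qa, qb, hx, -⟩ | ⟨qa, qb, hx, -⟩ | ⟨qa, qb, hx, -⟩
          · rcases hx with hx | hx | ⟨-, hx⟩ <;> exact absurd hx (by simp)
          · exact absurd hx (by simp)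
          · exact absurd hx (by simp)
          · exact absurd hx (by simp)
      · -- tst b 1 → tst b 2, rel a (B → C)
        refine ⟨v₁, v₂, by rw [hf']; cases b <;> (funext l; fin_cases l <;> rfl), rfl, ?_⟩
        rcases r' with i | ⟨b', k⟩
        · fin_cases i
          · exact (fun hx => absurd hx (by simp) : (tst b 2 q q' = st 0 → _))
          · exact (fun hx => absurd hx (by simp) : (tst b 2 q q' = st 0 → _))
          · exact (fun hx => absurd hx (by simp) : (tst b 2 q q' = st 0 → _))
          · obtain ⟨hx, -⟩ : tst b 1 q q' = st 0 ∧ v₁ = 0 ∧ v₂ = 0 := hj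
            exact absurd hx (by simp)
          · exfalso
            have hj' : LiveIdle M (tst b 1 q q') v₁ v₂ := hj
            rcases hj' with ⟨hx, -⟩ | ⟨q0, hx, -⟩ | ⟨bb, qa, qb, hx, -⟩ | ⟨bb, qa, qb, hx, -⟩
            · rcases hx with hx | hx | hx <;> exact absurd hx (by simp)
            · exact absurd hx (by simp)
            · exact absurd hx (by simp)
            · exact absurd hx (by simp)
        · have hj' : LiveServe M b' k (tst b 1 q q') v₁ v₂ := hj
          refine (?_ : LiveServe M b' k (tst b 2 q q') v₁ v₂)
          refine ⟨hj'.1, ?_⟩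
          rcases hj'.2 with ⟨hx, -⟩ | ⟨qa, qb, hx, -⟩ | ⟨qa, qb, hx, hz, hk⟩ | ⟨qa, qb, hx, -⟩
          · rcases hx with hx | hx | ⟨-, hx⟩ <;> exact absurd hx (by simp)
          · exact absurd hx (by simp)
          · obtain ⟨rfl, rfl, rfl⟩ : b = b' ∧ q = qa ∧ q' = qb := by simpa using hx
            exact Or.inr (Or.inr (Or.inr ⟨_, _, rfl, hz, hj'.1 (by rw [hk]; decide)⟩))
          · exact absurd hx (by simp)
  · -- thread 1 moves
    simp only [Prod.mk.injEq] at ht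
    obtain ⟨rfl, rfl, rfl⟩ := ht
    dsimp only [CPM] at hst
    cases l with
    | push => obtain ⟨a, -⟩ := hst; exact a.elim
    | pop => obtain ⟨a, -⟩ := hst; exact a.elim
    | state => simp only [PDS.RStep, pdsB] at hst; exact hst.1.elim
    | acq lk =>
      simp only [PDS.RStep] at hst
      obtain ⟨hmem, hen, -, hg'⟩ := hst
      simp only [pdsB, Set.mem_setOf_eq, Prod.mk.injEq] at hmem
      simp only [TwoPDS.rfreeLocks, Set.mem_setOf_eq] at hen
      try dsimp only at hen hg' hmem
      rcases hmem with ⟨rfl, rfl, rfl⟩ | ⟨rfl, rfl, rfl⟩ | ⟨rfl, rfl, rfl⟩ |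
        ⟨b, rfl, rfl, rfl⟩ | ⟨b, rfl, rfl, rfl⟩ | ⟨b, rfl, rfl, rfl⟩
      · -- t0 → t1 acq a1
        refine ⟨v₁, v₂, rfl, by rw [hg']; funext l; fin_cases l <;> rfl, ?_⟩
        exact (hj : p' = st 0 → v₁ = 0 ∧ v₂ = 0)
      · -- t1 → t2 acq a2
        refine ⟨v₁, v₂, rfl, by rw [hg']; funext l; fin_cases l <;> rfl, ?_⟩
        exact (hj : p' = st 0 → v₁ = 0 ∧ v₂ = 0)
      · -- t2 → t3 acq g
        have hfree : H0 p' v₁ v₂ gL = 0 := by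
          rcases hen with ⟨h1, -⟩ | h1
          · exact h1
          · exact absurd h1 (by decide)
        obtain rfl := H0_g_zero p' v₁ v₂ hfree
        obtain ⟨hv1, hv2⟩ := (hj : (st 0 : QA Q) = st 0 → v₁ = 0 ∧ v₂ = 0) rfl
        exact ⟨v₁, v₂, rfl, by rw [hg']; funext l; fin_cases l <;> rfl,
          (⟨rfl, hv1, hv2⟩ : Joint M (st 0) (ti 3) v₁ v₂)⟩
      · -- t → uu b 0 acq (rL b)
        have hfree : H0 p' v₁ v₂ (rL b) = 0 := by
          rcases hen with ⟨h1, -⟩ | h1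
          · exact h1
          · exact absurd h1 (by revert h1; cases b <;> decide)
        refine ⟨v₁, v₂, rfl, by rw [hg']; cases b <;> (funext l; fin_cases l <;> rfl), ?_⟩
        have hj' : LiveIdle M p' v₁ v₂ := hj
        refine (?_ : LiveServe M b 0 p' v₁ v₂)
        refine ⟨fun h => absurd rfl h, ?_⟩
        rcases hj' with ⟨hp, hv1, hv2⟩ | ⟨q, rfl, hR⟩ | ⟨b', q, q', rfl, hz⟩ |
          ⟨b', q, q', rfl, hz, hv0⟩
        · rcases hp with rfl | rfl | rfl
          · exact Or.inl ⟨Or.inl rfl, hv1, hv2⟩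
          · exact Or.inl ⟨Or.inr (Or.inl rfl), hv1, hv2⟩
          · cases b
            · exact Or.inl ⟨Or.inr (Or.inr ⟨rfl, rfl⟩), hv1, hv2⟩
            · exact absurd hfree one_ne_zero
        · exact absurd hfree (by cases b <;> exact one_ne_zero)
        · obtain rfl : b' = b := by
            cases b <;> cases b' <;> first | rfl | exact absurd hfree one_ne_zero
          exact Or.inr (Or.inl ⟨q, q', rfl, hz⟩)
        · obtain rfl : b' = b := by
            cases b <;> cases b' <;> first | rfl | exact absurd hfree one_ne_zero
          exact Or.inr (Or.inr (Or.inr ⟨q, q', rfl, hz, hv0⟩))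
      · -- uu b 0 → uu b 1 acq (cL b)
        have hfree : H0 p' v₁ v₂ (cL b) = 0 := by
          rcases hen with ⟨h1, -⟩ | h1
          · exact h1
          · exact absurd h1 (by revert h1; cases b <;> decide)
        have hv0 : vb b v₁ v₂ = 0 := by rw [← H0_at_c]; exact hfree
        refine ⟨v₁, v₂, rfl, by rw [hg']; cases b <;> (funext l; fin_cases l <;> rfl), ?_⟩
        have hj' : LiveServe M b 0 p' v₁ v₂ := hj
        refine (?_ : LiveServe M b 1 p' v₁ v₂)
        refine ⟨fun _ => hv0, ?_⟩
        rcases hj'.2 with c1 | c2 | ⟨q, q', hp, hz, hk⟩ | c4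
        · exact Or.inl c1
        · exact Or.inr (Or.inl c2)
        · exact absurd hk (by decide)
        · exact Or.inr (Or.inr (Or.inr c4))
      · -- uu b 3 → uu b 4 acq (aL b)
        have hfree : H0 p' v₁ v₂ (aL b) = 0 := by
          rcases hen with ⟨h1, -⟩ | h1
          · exact h1
          · exact absurd h1 (by revert h1; cases b <;> decide)
        refine ⟨v₁, v₂, rfl, by rw [hg']; cases b <;> (funext l; fin_cases l <;> rfl), ?_⟩
        have hj' : LiveServe M b 3 p' v₁ v₂ := hj
        refine (?_ : LiveServe M b 4 p' v₁ v₂)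
        refine ⟨fun _ => hj'.1 (by decide), ?_⟩
        rcases hj'.2 with c1 | c2 | ⟨q, q', rfl, hz, hk⟩ | c4
        · exact Or.inl c1
        · exact Or.inr (Or.inl c2)
        · exact absurd rfl (H0_a_zero _ v₁ v₂ b hfree q q')
        · exact Or.inr (Or.inr (Or.inr c4))
    | rel lk =>
      simp only [PDS.RStep] at hst
      obtain ⟨hmem, hpos, -, hg'⟩ := hst
      simp only [pdsB, Set.mem_setOf_eq, Prod.mk.injEq] at hmem
      try dsimp only at hpos hg' hmem
      rcases hmem with ⟨⟨rfl, rfl⟩, rfl⟩ | ⟨b, ⟨rfl, rfl⟩, rfl⟩ | ⟨b, ⟨rfl, rfl⟩, rfl⟩ |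
        ⟨b, ⟨rfl, rfl⟩, rfl⟩
      · -- t3 → t rel g
        obtain ⟨rfl, hv1, hv2⟩ : p' = st 0 ∧ v₁ = 0 ∧ v₂ = 0 := hj
        refine ⟨v₁, v₂, rfl, by rw [hg']; funext l; fin_cases l <;> rfl, ?_⟩
        exact (Or.inl ⟨Or.inl rfl, hv1, hv2⟩ : LiveIdle M (st 0) v₁ v₂)
      · -- uu b 1 → uu b 2 rel c
        refine ⟨v₁, v₂, rfl, by rw [hg']; cases b <;> (funext l; fin_cases l <;> rfl), ?_⟩
        have hj' : LiveServe M b 1 p' v₁ v₂ := hj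
        refine (?_ : LiveServe M b 2 p' v₁ v₂)
        refine ⟨fun _ => hj'.1 (by decide), ?_⟩
        rcases hj'.2 with c1 | c2 | ⟨q, q', hp, hz, hk⟩ | c4
        · exact Or.inl c1
        · exact Or.inr (Or.inl c2)
        · exact absurd hk (by decide)
        · exact Or.inr (Or.inr (Or.inr c4))
      · -- uu b 2 → uu b 3 rel a
        refine ⟨v₁, v₂, rfl, by rw [hg']; cases b <;> (funext l; fin_cases l <;> rfl), ?_⟩
        have hj' : LiveServe M b 2 p' v₁ v₂ := hj
        refine (?_ : LiveServe M b 3 p' v₁ v₂)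
        refine ⟨fun _ => hj'.1 (by decide), ?_⟩
        rcases hj'.2 with c1 | c2 | ⟨q, q', hp, hz, hk⟩ | c4
        · exact Or.inl c1
        · exact Or.inr (Or.inl c2)
        · exact absurd hk (by decide)
        · exact Or.inr (Or.inr (Or.inr c4))
      · -- uu b 4 → t rel r
        refine ⟨v₁, v₂, rfl, by rw [hg']; cases b <;> (funext l; fin_cases l <;> rfl), ?_⟩
        have hj' : LiveServe M b 4 p' v₁ v₂ := hj
        refine (?_ : LiveIdle M p' v₁ v₂)
        rcases hj'.2 with ⟨hp, hv1, hv2⟩ | ⟨q, q', rfl, hz⟩ | ⟨q, q', hp, hz, hk⟩ |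
          ⟨q, q', rfl, hz, hv0⟩
        · rcases hp with rfl | rfl | ⟨-, rfl⟩
          · exact Or.inl ⟨Or.inl rfl, hv1, hv2⟩
          · exact Or.inl ⟨Or.inr (Or.inl rfl), hv1, hv2⟩
          · exact Or.inl ⟨Or.inr (Or.inr rfl), hv1, hv2⟩
        · exact Or.inr (Or.inr (Or.inl ⟨b, q, q', rfl, hz⟩))
        · exact absurd hk (by decide)
        · exact Or.inr (Or.inr (Or.inr ⟨b, q, q', rfl, hz, hv0⟩))

end Step

section Completeness

variable {Q : Type} (M : TCM Q)

lemma inv_init : GInv M ((CPM M).rinitConf) := by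
  refine ⟨0, 0, ?_, ?_, ?_⟩
  · funext l; fin_cases l <;> rfl
  · funext l; fin_cases l <;> rfl
  · exact (fun _ => ⟨rfl, rfl⟩ : Joint M (st 0) (ti 0) 0 0)

lemma inv_reach (c : TwoPDS.RComp (CPM M)) : ∀ k, k ≤ c.len → GInv M (c.s k) := by
  intro k
  induction k with
  | zero => intro _; rw [c.init]; exact inv_init M
  | succ n ih =>
    intro hk
    exact inv_step M (c.step n (by omega)) (ih (by omega))

theorem reach_sound (h : (CPM M).RReach (sim M.final) (ti 4)) : M.Halts := by
  obtain ⟨c, h1, h2⟩ := h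
  obtain ⟨v₁, v₂, -, -, hj⟩ := inv_reach M c c.len le_rfl
  rw [h1, h2] at hj
  have hj' : LiveIdle M (sim M.final) v₁ v₂ := hj
  rcases hj' with ⟨hx, -⟩ | ⟨q0, hx, hR⟩ | ⟨bb, qa, qb, hx, -⟩ | ⟨bb, qa, qb, hx, -⟩
  · rcases hx with hx | hx | hx <;> exact absurd hx (by simp)
  · obtain rfl : q0 = M.final := by simpa using hx.symm
    exact ⟨(M.final, v₁, v₂), hR, rfl⟩
  · exact absurd hx (by simp)
  · exact absurd hx (by simp)

/-- Canonical configurations. -/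
def cfg (p : QA Q) (r : QB) (v₁ v₂ : ℕ) : TwoPDS.RConf2 (QA Q) Empty QB Empty (Fin 8) :=
  ((p, [], H0 p v₁ v₂), (r, [], H1 r))

def CanReach (x : TwoPDS.RConf2 (QA Q) Empty QB Empty (Fin 8)) : Prop :=
  ∃ c : TwoPDS.RComp (CPM M), c.s c.len = x

lemma canReach_init : CanReach M ((CPM M).rinitConf) :=
  ⟨⟨0, fun _ => (CPM M).rinitConf, fun _ => (Label.state, 0), rfl,
    fun k hk => absurd hk (by omega)⟩, rfl⟩

lemma CanReach.step {x y : TwoPDS.RConf2 (QA Q) Empty QB Empty (Fin 8)} {lab}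
    (h : CanReach M x) (hs : (CPM M).RStep x lab y) : CanReach M y := by
  obtain ⟨c, hc⟩ := h
  refine ⟨⟨c.len + 1, fun k => if k ≤ c.len then c.s k else y,
    fun k => if k = c.len then lab else c.lab k, ?_, ?_⟩, ?_⟩
  · simp only [Nat.zero_le, if_pos]; exact c.init
  · intro k hk
    rcases Nat.lt_succ_iff_lt_or_eq.mp hk with h' | rfl
    · rw [if_pos h'.le, if_pos (by omega : k + 1 ≤ c.len), if_neg (Nat.ne_of_lt h')]
      exact c.step k h'
    · rw [if_pos (le_refl c.len), if_neg (Nat.not_succ_le_self c.len), if_pos rfl, hc]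
      exact hs
  · dsimp only
    rw [if_neg (Nat.not_succ_le_self c.len)]

lemma step0_acq {p p' : QA Q} {r v₁ v₂ v₁' v₂'} (lk : Fin 8)
    (hmem : (p, (p', lk)) ∈ (pdsA M).acqTr)
    (hen : (H0 p v₁ v₂ lk = 0 ∧ H1 r lk = 0) ∨ 0 < H0 p v₁ v₂ lk)
    (hupd : H0 p' v₁' v₂' = Function.update (H0 p v₁ v₂) lk (H0 p v₁ v₂ lk + 1))
    (h : CanReach M (cfg p r v₁ v₂)) : CanReach M (cfg p' r v₁' v₂') :=
  h.step M (lab := (Label.acq lk, 0)) (Or.inl ⟨rfl, (⟨hmem, hen, rfl, hupd⟩ :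
    (pdsA M).RStep (TwoPDS.rfreeLocks (cfg p r v₁ v₂)) (cfg p r v₁ v₂).1
      (Label.acq lk) (cfg p' r v₁' v₂').1), rfl⟩)

lemma step0_rel {p p' : QA Q} {r v₁ v₂ v₁' v₂'} (lk : Fin 8)
    (hmem : ((p, lk), p') ∈ (pdsA M).relTr)
    (hpos : 0 < H0 p v₁ v₂ lk)
    (hupd : H0 p' v₁' v₂' = Function.update (H0 p v₁ v₂) lk (H0 p v₁ v₂ lk - 1))
    (h : CanReach M (cfg p r v₁ v₂)) : CanReach M (cfg p' r v₁' v₂') :=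
  h.step M (lab := (Label.rel lk, 0)) (Or.inl ⟨rfl, (⟨hmem, hpos, rfl, hupd⟩ :
    (pdsA M).RStep (TwoPDS.rfreeLocks (cfg p r v₁ v₂)) (cfg p r v₁ v₂).1
      (Label.rel lk) (cfg p' r v₁' v₂').1), rfl⟩)

lemma step0_state {p p' : QA Q} {r v₁ v₂}
    (hmem : (p, p') ∈ (pdsA M).stateTr)
    (hupd : H0 p' v₁ v₂ = H0 p v₁ v₂)
    (h : CanReach M (cfg p r v₁ v₂)) : CanReach M (cfg p' r v₁ v₂) :=
  h.step M (lab := (Label.state, 0)) (Or.inl ⟨rfl, (⟨hmem, rfl, hupd⟩ :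
    (pdsA M).RStep (TwoPDS.rfreeLocks (cfg p r v₁ v₂)) (cfg p r v₁ v₂).1
      Label.state (cfg p' r v₁ v₂).1), rfl⟩)

lemma step1_acq {r r' : QB} {p : QA Q} {v₁ v₂} (lk : Fin 8)
    (hmem : (r, (r', lk)) ∈ pdsB.acqTr)
    (hen : (H0 p v₁ v₂ lk = 0 ∧ H1 r lk = 0) ∨ 0 < H1 r lk)
    (hupd : H1 r' = Function.update (H1 r) lk (H1 r lk + 1))
    (h : CanReach M (cfg p r v₁ v₂)) : CanReach M (cfg p r' v₁ v₂) :=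
  h.step M (lab := (Label.acq lk, 1)) (Or.inr ⟨rfl, (⟨hmem, hen, rfl, hupd⟩ :
    pdsB.RStep (TwoPDS.rfreeLocks (cfg p r v₁ v₂)) (cfg p r v₁ v₂).2
      (Label.acq lk) (cfg p r' v₁ v₂).2), rfl⟩)

lemma step1_rel {r r' : QB} {p : QA Q} {v₁ v₂} (lk : Fin 8)
    (hmem : ((r, lk), r') ∈ pdsB.relTr)
    (hpos : 0 < H1 r lk)
    (hupd : H1 r' = Function.update (H1 r) lk (H1 r lk - 1))
    (h : CanReach M (cfg p r v₁ v₂)) : CanReach M (cfg p r' v₁ v₂) :=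
  h.step M (lab := (Label.rel lk, 1)) (Or.inr ⟨rfl, (⟨hmem, hpos, rfl, hupd⟩ :
    pdsB.RStep (TwoPDS.rfreeLocks (cfg p r v₁ v₂)) (cfg p r v₁ v₂).2
      (Label.rel lk) (cfg p r' v₁ v₂).2), rfl⟩)

lemma canReach_base : CanReach M (cfg (sim M.start) (ti 4) 0 0) := by
  have h0 : CanReach M (cfg (st 0) (ti 0) 0 0) := by
    have := canReach_init M
    have he : (CPM M).rinitConf = cfg (st 0) (ti 0) 0 0 := by
      refine Prod.ext (Prod.ext rfl (Prod.ext rfl ?_)) (Prod.ext rfl (Prod.ext rfl ?_)) <;>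
        (funext l; fin_cases l <;> rfl)
    rwa [he] at this
  have h1 : CanReach M (cfg (st 0) (ti 1) 0 0) :=
    step1_acq M (aL true) (Or.inl rfl) (Or.inl ⟨rfl, rfl⟩)
      (by funext l; fin_cases l <;> rfl) h0
  have h2 : CanReach M (cfg (st 0) (ti 2) 0 0) :=
    step1_acq M (aL false) (Or.inr (Or.inl rfl)) (Or.inl ⟨rfl, rfl⟩)
      (by funext l; fin_cases l <;> rfl) h1
  have h3 : CanReach M (cfg (st 0) (ti 3) 0 0) :=
    step1_acq M gL (Or.inr (Or.inr (Or.inl rfl))) (Or.inl ⟨rfl, rfl⟩)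
      (by funext l; fin_cases l <;> rfl) h2
  have h4 : CanReach M (cfg (st 0) (ti 4) 0 0) :=
    step1_rel M gL (Or.inl rfl) Nat.one_pos
      (by funext l; fin_cases l <;> rfl) h3
  have h5 : CanReach M (cfg (st 1) (ti 4) 0 0) :=
    step0_acq M gL (Or.inl rfl) (Or.inl ⟨rfl, rfl⟩)
      (by funext l; fin_cases l <;> rfl) h4
  have h6 : CanReach M (cfg (st 2) (ti 4) 0 0) :=
    step0_acq M (rL true) (Or.inr (Or.inl rfl)) (Or.inl ⟨rfl, rfl⟩)
      (by funext l; fin_cases l <;> rfl) h5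
  exact step0_acq M (rL false) (Or.inr (Or.inr (Or.inl rfl))) (Or.inl ⟨rfl, rfl⟩)
    (by funext l; fin_cases l <;> rfl) h6

lemma canReach_ztest {q q' v₁ v₂} (b : Bool) (hb : (q, q') ∈ zT M b)
    (hv : vb b v₁ v₂ = 0)
    (h : CanReach M (cfg (sim q) (ti 4) v₁ v₂)) :
    CanReach M (cfg (sim q') (ti 4) v₁ v₂) := by
  have h1 : CanReach M (cfg (tst b 0 q q') (ti 4) v₁ v₂) :=
    step0_rel M (rL b)
      (Or.inr (Or.inl ⟨b, q, q', hb, rfl⟩))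
      (by cases b <;> exact Nat.one_pos)
      (by cases b <;> (funext l; fin_cases l <;> rfl)) h
  have h2 : CanReach M (cfg (tst b 0 q q') (uu b 0) v₁ v₂) :=
    step1_acq M (rL b)
      (Or.inr (Or.inr (Or.inr (Or.inl ⟨b, rfl⟩))))
      (Or.inl ⟨by cases b <;> rfl, by cases b <;> rfl⟩)
      (by cases b <;> (funext l; fin_cases l <;> rfl)) h1
  have h3 : CanReach M (cfg (tst b 0 q q') (uu b 1) v₁ v₂) :=
    step1_acq M (cL b)
      (Or.inr (Or.inr (Or.inr (Or.inr (Or.inl ⟨b, rfl⟩)))))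
      (Or.inl ⟨by rw [H0_at_c]; exact hv, by cases b <;> rfl⟩)
      (by cases b <;> (funext l; fin_cases l <;> rfl)) h2
  have h4 : CanReach M (cfg (tst b 0 q q') (uu b 2) v₁ v₂) :=
    step1_rel M (cL b)
      (Or.inr (Or.inl ⟨b, rfl⟩))
      (by cases b <;> exact Nat.one_pos)
      (by cases b <;> (funext l; fin_cases l <;> rfl)) h3
  have h5 : CanReach M (cfg (tst b 0 q q') (uu b 3) v₁ v₂) :=
    step1_rel M (aL b)
      (Or.inr (Or.inr (Or.inl ⟨b, rfl⟩)))
      (by cases b <;> exact Nat.one_pos)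
      (by cases b <;> (funext l; fin_cases l <;> rfl)) h4
  have h6 : CanReach M (cfg (tst b 1 q q') (uu b 3) v₁ v₂) :=
    step0_acq M (aL b)
      (Or.inr (Or.inr (Or.inr (Or.inr (Or.inl ⟨b, q, q', rfl⟩)))))
      (Or.inl ⟨by cases b <;> rfl, by cases b <;> rfl⟩)
      (by cases b <;> (funext l; fin_cases l <;> rfl)) h5
  have h7 : CanReach M (cfg (tst b 2 q q') (uu b 3) v₁ v₂) :=
    step0_rel M (aL b)
      (Or.inr (Or.inr ⟨b, q, q', rfl⟩))
      (by cases b <;> exact Nat.one_pos)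
      (by cases b <;> (funext l; fin_cases l <;> rfl)) h6
  have h8 : CanReach M (cfg (tst b 2 q q') (uu b 4) v₁ v₂) :=
    step1_acq M (aL b)
      (Or.inr (Or.inr (Or.inr (Or.inr (Or.inr ⟨b, rfl⟩)))))
      (Or.inl ⟨by cases b <;> rfl, by cases b <;> rfl⟩)
      (by cases b <;> (funext l; fin_cases l <;> rfl)) h7
  have h9 : CanReach M (cfg (tst b 2 q q') (ti 4) v₁ v₂) :=
    step1_rel M (rL b)
      (Or.inr (Or.inr (Or.inr ⟨b, rfl⟩)))
      (by cases b <;> exact Nat.one_pos)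
      (by cases b <;> (funext l; fin_cases l <;> rfl)) h8
  exact step0_acq M (rL b)
    (Or.inr (Or.inr (Or.inr (Or.inr (Or.inr ⟨b, q, q', rfl⟩)))))
    (Or.inl ⟨by cases b <;> rfl, by cases b <;> rfl⟩)
    (by cases b <;> (funext l; fin_cases l <;> rfl)) h9

lemma canReach_K {x : Q × ℕ × ℕ}
    (h : Relation.ReflTransGen M.Step (M.start, 0, 0) x) :
    CanReach M (cfg (sim x.1) (ti 4) x.2.1 x.2.2) := by
  induction h with
  | refl => exact canReach_base M
  | tail hxy hstep ih =>
    rename_i y z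
    obtain ⟨qy, w₁, w₂⟩ := y
    obtain ⟨qz, u₁, u₂⟩ := z
    rcases hstep with ⟨hm, h1, h2⟩ | ⟨hm, h1, h2⟩ | ⟨hm, h1, h2⟩ | ⟨hm, h1, h2⟩ |
      ⟨hm, h1, h2⟩ | ⟨hm, h1, h2, h3⟩ | ⟨hm, h1, h2, h3⟩
    all_goals dsimp only at hm h1 h2 ih ⊢
    · rw [h1, h2]
      exact step0_state M ⟨qy, qz, hm, rfl⟩ rfl ih
    · -- inc 1
      rw [h1, h2]
      exact step0_acq M (cL true)
        (Or.inr (Or.inr (Or.inr (Or.inl ⟨true, qy, qz, hm, rfl⟩))))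
        (by rcases Nat.eq_zero_or_pos (H0 (sim qy) w₁ w₂ (cL true)) with h0 | h0
            · exact Or.inl ⟨h0, rfl⟩
            · exact Or.inr h0)
        (by funext l; fin_cases l <;> rfl) ih
    · -- inc 2
      rw [h1, h2]
      exact step0_acq M (cL false)
        (Or.inr (Or.inr (Or.inr (Or.inl ⟨false, qy, qz, hm, rfl⟩))))
        (by rcases Nat.eq_zero_or_pos (H0 (sim qy) w₁ w₂ (cL false)) with h0 | h0
            · exact Or.inl ⟨h0, rfl⟩
            · exact Or.inr h0)
        (by funext l; fin_cases l <;> rfl) ih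
    · -- dec 1
      rw [h1] at ih; rw [← h2] at ih
      exact step0_rel M (cL true)
        (Or.inl ⟨true, qy, qz, hm, rfl⟩)
        (show 0 < u₁ + 1 from Nat.succ_pos u₁)
        (by funext l; fin_cases l <;> rfl) ih
    · -- dec 2
      rw [h2] at ih; rw [← h1] at ih
      exact step0_rel M (cL false)
        (Or.inl ⟨false, qy, qz, hm, rfl⟩)
        (show 0 < u₂ + 1 from Nat.succ_pos u₂)
        (by funext l; fin_cases l <;> rfl) ih
    · -- zero test 1
      dsimp only at h3
      rw [h2, h3]; rw [h1] at ih
      exact canReach_ztest M true hm rfl ih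
    · -- zero test 2
      dsimp only at h3
      rw [h2, h3]; rw [h1] at ih
      exact canReach_ztest M false hm rfl ih

theorem reach_complete (h : M.Halts) : (CPM M).RReach (sim M.final) (ti 4) := by
  obtain ⟨x, hx, hfin⟩ := h
  obtain ⟨c, hc⟩ := canReach_K M hx
  exact ⟨c, by rw [hc, hfin]; rfl, by rw [hc]; rfl⟩

end Completeness

section Final

variable {Q : Type} (M : TCM Q)

lemma contextual (i : Fin 2) : (CPM M).RContextual i := by
  intro c l j hm
  exfalso
  have hstep := c.step l (lt_trans hm.1 hm.2.1)
  rw [hm.2.2.1] at hstep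
  rcases hstep with ⟨-, h, -⟩ | ⟨-, h, -⟩
  · obtain ⟨a, -⟩ := h; exact a.elim
  · obtain ⟨a, -⟩ := h; exact a.elim

end Final

/-- For every two-counter machine `M` there are a finite set of
locks with exactly 8 elements, a 2-PDS `CP = (P₁, P₂)` communicating via these
reentrant locks in which both threads have empty stack alphabet (hence trivially
follow contextual reentrant locking and never use their stacks), and control states
`q_f'` of `P₁` and `q∗` of `P₂` such that `M` halts iff `Reach(CP, q_f', q∗)`. -/
theorem tcm_halts_iff_reentrant_reach
    {Q : Type} [Finite Q] (M : TCM Q) :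
    ∃ (Locks : Type) (_ : Fintype Locks) (_ : DecidableEq Locks),
      Fintype.card Locks = 8 ∧
      ∃ (Q₁ Q₂ : Type) (_ : Finite Q₁) (_ : Finite Q₂)
        (CP : TwoPDS Q₁ Empty Q₂ Empty Locks) (qf : Q₁) (qst : Q₂),
        CP.RContextual 0 ∧ CP.RContextual 1 ∧
        (M.Halts ↔ CP.RReach qf qst) :=
  ⟨Fin 8, inferInstance, inferInstance, by simp, QA Q, QB, inferInstance, inferInstance,
    CPM M, sim M.final, ti 4, contextual M 0, contextual M 1,
    ⟨reach_complete M, reach_sound M⟩⟩
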